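/- Let V be a finite set of K ≥ 2 vertices, let z : V → ℝ₊ satisfy ∑_{i∈V} z_i ≤ 1 and z_i ≥ β for all i, where β ∈ (0, 1/2]. Let G = (V, E) be a directed graph with all self-loops and edge probabilities p(i,j) ∈ [0,1], let ρ = min_{i∈V} ∑_{j∈C^in(i)} p(j,i) > 0, let w⁻_i = (min_{j∈C^in(i)} p(j,i))⁻¹ and w⁺_i = (min_{j∈C^out(i)} p(i,j))⁻¹ (minima over edges in E). Then ∑_{i∈V} z_i / (∑_{j∈C^in(i)} z_j · p(j,i)) ≤ 6·(α_w(G, w⁻) + α_w(G, w⁺))·ln(2K²/(β·ρ)). -/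

import Mathlib

open Finset

/-- a set of vertices is independent in a directed graph, ignoring orientation. -/
def IsIndepSet {V : Type*} (E : V → V → Prop) (S : Finset V) : Prop :=
  ∀ i ∈ S, ∀ j ∈ S, i ≠ j → ¬ E i j ∧ ¬ E j i

/-- the weighted independence number of a directed graph. -/
noncomputable def weightedIndepNum {V : Type*} [Fintype V]
    (E : V → V → Prop) (w : V → ℝ) : ℝ :=
  sSup {x | ∃ S : Finset V, IsIndepSet E S ∧ x = ∑ i ∈ S, w i}

lemma caroWei {V : Type*} [Fintype V] [DecidableEq V]
    (E : V → V → Prop) [DecidableRel E] (hloop : ∀ i, E i i)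
    (μ w : V → ℝ) (hμ : ∀ v, 0 < μ v) (hw : ∀ v, 0 ≤ w v) :
    ∀ U : Finset V, ∀ A : ℝ,
      (∀ S : Finset V, S ⊆ U → IsIndepSet E S → ∑ i ∈ S, w i ≤ A) →
      ∑ v ∈ U, w v * μ v / (∑ u ∈ U.filter (fun u => E u v ∨ E v u), μ u) ≤ A := by
  intro U
  induction U using Finset.strongInduction with
  | _ U ih =>
    intro A hA
    rcases U.eq_empty_or_nonempty with rfl | hU
    · simpa using hA ∅ (Finset.empty_subset _) (by intro i hi; simp at hi)
    obtain ⟨v₀, hv₀U, hmax⟩ := U.exists_max_image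
      (fun v => w v / (∑ u ∈ U.filter (fun u => E u v ∨ E v u), μ u)) hU
    have hself : ∀ v ∈ U, v ∈ U.filter (fun u => E u v ∨ E v u) := by
      intro v hv
      simp only [Finset.mem_filter]
      exact ⟨hv, Or.inl (hloop v)⟩
    have hNbpos : ∀ v ∈ U, 0 < ∑ u ∈ U.filter (fun u => E u v ∨ E v u), μ u := by
      intro v hv
      exact Finset.sum_pos' (fun u _ => (hμ u).le) ⟨v, hself v hv, hμ v⟩
    have hv₀Nv : v₀ ∈ U.filter (fun u => E u v₀ ∨ E v₀ u) := hself v₀ hv₀U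
    have hNvsub : U.filter (fun u => E u v₀ ∨ E v₀ u) ⊆ U := Finset.filter_subset _ _
    -- part 1 : sum over the closed neighborhood of v₀
    have hpart1 : ∑ v ∈ U.filter (fun u => E u v₀ ∨ E v₀ u),
        w v * μ v / (∑ u ∈ U.filter (fun u => E u v ∨ E v u), μ u) ≤ w v₀ := by
      have h1 : ∀ v ∈ U.filter (fun u => E u v₀ ∨ E v₀ u),
          w v * μ v / (∑ u ∈ U.filter (fun u => E u v ∨ E v u), μ u) ≤
          (w v₀ / (∑ u ∈ U.filter (fun u => E u v₀ ∨ E v₀ u), μ u)) * μ v := by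
        intro v hv
        have hvU : v ∈ U := hNvsub hv
        have h2 := hmax v hvU
        calc w v * μ v / (∑ u ∈ U.filter (fun u => E u v ∨ E v u), μ u)
            = (w v / (∑ u ∈ U.filter (fun u => E u v ∨ E v u), μ u)) * μ v := by ring
          _ ≤ (w v₀ / (∑ u ∈ U.filter (fun u => E u v₀ ∨ E v₀ u), μ u)) * μ v :=
              mul_le_mul_of_nonneg_right h2 (hμ v).le
      calc ∑ v ∈ U.filter (fun u => E u v₀ ∨ E v₀ u),
            w v * μ v / (∑ u ∈ U.filter (fun u => E u v ∨ E v u), μ u)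
          ≤ ∑ v ∈ U.filter (fun u => E u v₀ ∨ E v₀ u),
            (w v₀ / (∑ u ∈ U.filter (fun u => E u v₀ ∨ E v₀ u), μ u)) * μ v :=
            Finset.sum_le_sum h1
        _ = (w v₀ / (∑ u ∈ U.filter (fun u => E u v₀ ∨ E v₀ u), μ u)) *
            (∑ u ∈ U.filter (fun u => E u v₀ ∨ E v₀ u), μ u) := by
            rw [← Finset.mul_sum]
        _ = w v₀ := div_mul_cancel₀ _ (ne_of_gt (hNbpos v₀ hv₀U))
    -- part 2 : rest
    set U' : Finset V := U \ U.filter (fun u => E u v₀ ∨ E v₀ u) with hU'def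
    have hU'ss : U' ⊂ U := Finset.sdiff_ssubset hNvsub ⟨v₀, hv₀Nv⟩
    have hA' : ∀ S : Finset V, S ⊆ U' → IsIndepSet E S → ∑ i ∈ S, w i ≤ A - w v₀ := by
      intro S hS hSind
      have hv₀S : v₀ ∉ S := by
        intro h
        have := hS h
        rw [hU'def, Finset.mem_sdiff] at this
        exact this.2 hv₀Nv
      have hnotadj : ∀ j ∈ S, ¬ (E j v₀ ∨ E v₀ j) := by
        intro j hj
        have := hS hj
        rw [hU'def, Finset.mem_sdiff, Finset.mem_filter] at this
        intro hc
        exact this.2 ⟨this.1, hc⟩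
      have hins : IsIndepSet E (insert v₀ S) := by
        intro i hi j hj hij
        rcases Finset.mem_insert.mp hi with rfl | hiS
        · rcases Finset.mem_insert.mp hj with rfl | hjS
          · exact absurd rfl hij
          · have h := hnotadj j hjS
            exact ⟨fun hc => h (Or.inr hc), fun hc => h (Or.inl hc)⟩
        · rcases Finset.mem_insert.mp hj with rfl | hjS
          · have h := hnotadj i hiS
            exact ⟨fun hc => h (Or.inl hc), fun hc => h (Or.inr hc)⟩
          · exact hSind i hiS j hjS hij
      have hsub : insert v₀ S ⊆ U :=
        Finset.insert_subset hv₀U (hS.trans (Finset.sdiff_subset.trans (le_refl U)))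
      have := hA (insert v₀ S) hsub hins
      rw [Finset.sum_insert hv₀S] at this
      linarith
    have hpart2 : ∑ v ∈ U', w v * μ v / (∑ u ∈ U.filter (fun u => E u v ∨ E v u), μ u)
        ≤ A - w v₀ := by
      have hmono : ∀ v ∈ U', w v * μ v / (∑ u ∈ U.filter (fun u => E u v ∨ E v u), μ u)
          ≤ w v * μ v / (∑ u ∈ U'.filter (fun u => E u v ∨ E v u), μ u) := by
        intro v hv
        have hvU : v ∈ U := (Finset.sdiff_subset : U' ⊆ U) hv
        have hpos' : 0 < ∑ u ∈ U'.filter (fun u => E u v ∨ E v u), μ u := by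
          refine Finset.sum_pos' (fun u _ => (hμ u).le) ⟨v, ?_, hμ v⟩
          simp only [Finset.mem_filter]
          exact ⟨hv, Or.inl (hloop v)⟩
        have hsub2 : U'.filter (fun u => E u v ∨ E v u) ⊆ U.filter (fun u => E u v ∨ E v u) :=
          Finset.filter_subset_filter _ (Finset.sdiff_subset)
        have hle : ∑ u ∈ U'.filter (fun u => E u v ∨ E v u), μ u ≤
            ∑ u ∈ U.filter (fun u => E u v ∨ E v u), μ u :=
          Finset.sum_le_sum_of_subset_of_nonneg hsub2 (fun u _ _ => (hμ u).le)
        exact div_le_div_of_nonneg_left (mul_nonneg (hw v) (hμ v).le) hpos' hle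
      calc ∑ v ∈ U', w v * μ v / (∑ u ∈ U.filter (fun u => E u v ∨ E v u), μ u)
          ≤ ∑ v ∈ U', w v * μ v / (∑ u ∈ U'.filter (fun u => E u v ∨ E v u), μ u) :=
            Finset.sum_le_sum hmono
        _ ≤ A - w v₀ := ih U' hU'ss (A - w v₀) hA'
    have hsplit := Finset.sum_sdiff (f := fun v =>
      w v * μ v / (∑ u ∈ U.filter (fun u => E u v ∨ E v u), μ u)) hNvsub
    rw [← hsplit]
    rw [hU'def] at hpart2
    linarith

lemma exists_good_vertex {V : Type*} [Fintype V] [DecidableEq V]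
    (E : V → V → Prop) [DecidableRel E] (hloop : ∀ i, E i i)
    (p : V → V → ℝ) (z minIn minOut : V → ℝ) (β A : ℝ) (hβ0 : 0 < β)
    (hzβ : ∀ i, β ≤ z i)
    (hp0 : ∀ i j, 0 ≤ p i j)
    (hIn : ∀ i, 0 < minIn i) (hOut : ∀ i, 0 < minOut i)
    (hInle : ∀ i j, E j i → minIn i ≤ p j i)
    (hOutle : ∀ i j, E i j → minOut i ≤ p i j)
    (hA : ∀ S : Finset V, IsIndepSet E S → ∑ i ∈ S, ((minIn i)⁻¹ + (minOut i)⁻¹) ≤ A)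
    (U : Finset V) (hU : U.Nonempty) :
    ∃ v ∈ U, (∑ u ∈ U, z u) / (2 * A) ≤ ∑ u ∈ U.filter (fun u => E u v), z u * p u v := by
  classical
  have hzpos : ∀ i, 0 < z i := fun i => lt_of_lt_of_le hβ0 (hzβ i)
  set Z := ∑ u ∈ U, z u with hZdef
  have hZpos : 0 < Z := Finset.sum_pos (fun i _ => hzpos i) hU
  obtain ⟨v₁, hv₁⟩ := hU
  have hsing : ∀ v : V, IsIndepSet E {v} := by
    intro v i hi j hj hij
    rw [Finset.mem_singleton] at hi hj
    subst hi; subst hj; exact absurd rfl hij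
  have hApos : 0 < A := by
    have h := hA {v₁} (hsing v₁)
    rw [Finset.sum_singleton] at h
    have h1 := hIn v₁
    have h2 := hOut v₁
    have : 0 < (minIn v₁)⁻¹ + (minOut v₁)⁻¹ := by positivity
    linarith
  by_contra hcon
  push_neg at hcon
  -- weighted upper bound
  have hup : ∑ v ∈ U, z v * (∑ u ∈ U.filter (fun u => E u v), z u * p u v)
      < Z * (Z / (2 * A)) := by
    have h1 : ∑ v ∈ U, z v * (∑ u ∈ U.filter (fun u => E u v), z u * p u v)
        < ∑ v ∈ U, z v * (Z / (2 * A)) := by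
      refine Finset.sum_lt_sum_of_nonempty ⟨v₁, hv₁⟩ ?_
      intro v hv
      exact mul_lt_mul_of_pos_left (hcon v hv) (hzpos v)
    rw [← Finset.sum_mul] at h1
    exact h1
  -- lower bound per vertex on the denominator
  have hDv : ∀ v ∈ U, 2⁻¹ * (minIn v * (∑ u ∈ U.filter (fun u => E u v), z u)
      + ∑ u ∈ U.filter (fun u => E u v), z u * minOut u)
      ≤ ∑ u ∈ U.filter (fun u => E u v), z u * p u v := by
    intro v hv
    have h1 : ∀ u ∈ U.filter (fun u => E u v),
        z u * (2⁻¹ * (minIn v + minOut u)) ≤ z u * p u v := by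
      intro u hu
      obtain ⟨huU, huv⟩ := Finset.mem_filter.mp hu
      have e1 := hInle v u huv
      have e2 := hOutle u v huv
      have hzu := (hzpos u).le
      have : 2⁻¹ * (minIn v + minOut u) ≤ p u v := by linarith
      exact mul_le_mul_of_nonneg_left this hzu
    calc 2⁻¹ * (minIn v * (∑ u ∈ U.filter (fun u => E u v), z u)
          + ∑ u ∈ U.filter (fun u => E u v), z u * minOut u)
        = ∑ u ∈ U.filter (fun u => E u v), z u * (2⁻¹ * (minIn v + minOut u)) := by
          rw [Finset.mul_sum, ← Finset.sum_add_distrib, Finset.mul_sum]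
          exact Finset.sum_congr rfl (fun u hu => by ring)
      _ ≤ ∑ u ∈ U.filter (fun u => E u v), z u * p u v := Finset.sum_le_sum h1
  have hS1 : 2⁻¹ * ((∑ v ∈ U, minIn v * z v * (∑ u ∈ U.filter (fun u => E u v), z u))
      + (∑ v ∈ U, z v * ∑ u ∈ U.filter (fun u => E u v), z u * minOut u))
      ≤ ∑ v ∈ U, z v * (∑ u ∈ U.filter (fun u => E u v), z u * p u v) := by
    rw [← Finset.sum_add_distrib, Finset.mul_sum]
    refine Finset.sum_le_sum ?_
    intro v hv
    have h := hDv v hv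
    calc 2⁻¹ * (minIn v * z v * (∑ u ∈ U.filter (fun u => E u v), z u)
          + z v * ∑ u ∈ U.filter (fun u => E u v), z u * minOut u)
        = z v * (2⁻¹ * (minIn v * (∑ u ∈ U.filter (fun u => E u v), z u)
          + ∑ u ∈ U.filter (fun u => E u v), z u * minOut u)) := by ring
      _ ≤ z v * (∑ u ∈ U.filter (fun u => E u v), z u * p u v) :=
          mul_le_mul_of_nonneg_left h (hzpos v).le
  -- swap double sum
  have hswap : ∑ v ∈ U, z v * ∑ u ∈ U.filter (fun u => E u v), z u * minOut u
      = ∑ v ∈ U, minOut v * z v * ∑ u ∈ U.filter (fun u => E v u), z u := by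
    have l1 : ∑ v ∈ U, z v * ∑ u ∈ U.filter (fun u => E u v), z u * minOut u
        = ∑ v ∈ U, ∑ u ∈ U, (if E u v then z v * (z u * minOut u) else 0) := by
      refine Finset.sum_congr rfl (fun v hv => ?_)
      rw [Finset.sum_filter, Finset.mul_sum]
      exact Finset.sum_congr rfl (fun u hu => by split_ifs <;> simp)
    have l2 : ∑ v ∈ U, minOut v * z v * ∑ u ∈ U.filter (fun u => E v u), z u
        = ∑ v ∈ U, ∑ u ∈ U, (if E v u then minOut v * z v * z u else 0) := by
      refine Finset.sum_congr rfl (fun v hv => ?_)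
      rw [Finset.sum_filter, Finset.mul_sum]
      exact Finset.sum_congr rfl (fun u hu => by split_ifs <;> simp)
    rw [l1, l2, Finset.sum_comm]
    refine Finset.sum_congr rfl (fun v hv => Finset.sum_congr rfl (fun u hu => ?_))
    split_ifs with h
    · ring
    · rfl
  -- per-vertex comparison with undirected closed neighborhood
  have hper : ∀ v ∈ U,
      z v * (∑ u ∈ U.filter (fun u => E u v ∨ E v u), z u) / ((minIn v)⁻¹ + (minOut v)⁻¹)
      ≤ minIn v * z v * (∑ u ∈ U.filter (fun u => E u v), z u)
        + minOut v * z v * (∑ u ∈ U.filter (fun u => E v u), z u) := by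
    intro v hv
    set a := ∑ u ∈ U.filter (fun u => E u v), z u with hadef
    set b := ∑ u ∈ U.filter (fun u => E v u), z u with hbdef
    set c := ∑ u ∈ U.filter (fun u => E u v ∨ E v u), z u with hcdef
    have ha0 : 0 ≤ a := Finset.sum_nonneg (fun u _ => (hzpos u).le)
    have hb0 : 0 ≤ b := Finset.sum_nonneg (fun u _ => (hzpos u).le)
    have hcab : c ≤ a + b := by
      have hsub2 : U.filter (fun u => E u v ∨ E v u) ⊆
          U.filter (fun u => E u v) ∪ U.filter (fun u => E v u) := by
        intro u hu
        rw [Finset.mem_filter] at hu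
        rcases hu.2 with h | h
        · exact Finset.mem_union_left _ (Finset.mem_filter.mpr ⟨hu.1, h⟩)
        · exact Finset.mem_union_right _ (Finset.mem_filter.mpr ⟨hu.1, h⟩)
      have h1 : c ≤ ∑ u ∈ U.filter (fun u => E u v) ∪ U.filter (fun u => E v u), z u :=
        Finset.sum_le_sum_of_subset_of_nonneg hsub2 (fun u _ _ => (hzpos u).le)
      have h2 : ∑ u ∈ U.filter (fun u => E u v) ∪ U.filter (fun u => E v u), z u ≤ a + b := by
        rw [← Finset.union_sdiff_self_eq_union, Finset.sum_union Finset.disjoint_sdiff]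
        have : ∑ u ∈ U.filter (fun u => E v u) \ U.filter (fun u => E u v), z u ≤ b :=
          Finset.sum_le_sum_of_subset_of_nonneg Finset.sdiff_subset (fun u _ _ => (hzpos u).le)
        linarith
      linarith
    set m := minIn v with hmdef
    set o := minOut v with hodef
    have hm : 0 < m := hIn v
    have ho : 0 < o := hOut v
    have hwpos : 0 < m⁻¹ + o⁻¹ := add_pos (inv_pos.mpr hm) (inv_pos.mpr ho)
    have h1 : (m⁻¹ + o⁻¹)⁻¹ ≤ m := by
      have := inv_anti₀ (inv_pos.mpr hm)
        (le_add_of_nonneg_right (le_of_lt (inv_pos.mpr ho)))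
      simpa using this
    have h2 : (m⁻¹ + o⁻¹)⁻¹ ≤ o := by
      have := inv_anti₀ (inv_pos.mpr ho)
        (le_add_of_nonneg_left (le_of_lt (inv_pos.mpr hm)))
      simpa using this
    have hwinv0 : 0 ≤ (m⁻¹ + o⁻¹)⁻¹ := le_of_lt (inv_pos.mpr hwpos)
    have e1 : z v * c * (m⁻¹ + o⁻¹)⁻¹ ≤ z v * (a + b) * (m⁻¹ + o⁻¹)⁻¹ := by
      have := mul_le_mul_of_nonneg_left hcab (hzpos v).le
      exact mul_le_mul_of_nonneg_right this hwinv0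
    have e3 : z v * a * (m⁻¹ + o⁻¹)⁻¹ ≤ z v * a * m :=
      mul_le_mul_of_nonneg_left h1 (mul_nonneg (hzpos v).le ha0)
    have e4 : z v * b * (m⁻¹ + o⁻¹)⁻¹ ≤ z v * b * o :=
      mul_le_mul_of_nonneg_left h2 (mul_nonneg (hzpos v).le hb0)
    rw [div_eq_mul_inv]
    nlinarith [e1, e3, e4]
  -- Cauchy-Schwarz + caroWei
  have hCW : ∑ v ∈ U, ((minIn v)⁻¹ + (minOut v)⁻¹) * z v /
      (∑ u ∈ U.filter (fun u => E u v ∨ E v u), z u) ≤ A := by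
    refine caroWei E hloop z (fun v => (minIn v)⁻¹ + (minOut v)⁻¹) hzpos
      (fun v => add_nonneg (le_of_lt (inv_pos.mpr (hIn v))) (le_of_lt (inv_pos.mpr (hOut v)))) U A ?_
    intro S _ hS
    exact hA S hS
  have hNbpos : ∀ v ∈ U, 0 < ∑ u ∈ U.filter (fun u => E u v ∨ E v u), z u := by
    intro v hv
    refine Finset.sum_pos' (fun u _ => (hzpos u).le) ⟨v, ?_, hzpos v⟩
    simp only [Finset.mem_filter]
    exact ⟨hv, Or.inl (hloop v)⟩
  have hCS : Z ^ 2 ≤ A * ∑ v ∈ U,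
      z v * (∑ u ∈ U.filter (fun u => E u v ∨ E v u), z u) / ((minIn v)⁻¹ + (minOut v)⁻¹) := by
    set f : V → ℝ := fun v =>
      Real.sqrt (((minIn v)⁻¹ + (minOut v)⁻¹) * z v /
        (∑ u ∈ U.filter (fun u => E u v ∨ E v u), z u)) with hfdef
    set g : V → ℝ := fun v =>
      Real.sqrt (z v * (∑ u ∈ U.filter (fun u => E u v ∨ E v u), z u) /
        ((minIn v)⁻¹ + (minOut v)⁻¹)) with hgdef
    have hfg : ∀ v ∈ U, f v * g v = z v := by
      intro v hv
      have hw : 0 < (minIn v)⁻¹ + (minOut v)⁻¹ :=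
        add_pos (inv_pos.mpr (hIn v)) (inv_pos.mpr (hOut v))
      have hNb := hNbpos v hv
      have hwn : 0 ≤ ((minIn v)⁻¹ + (minOut v)⁻¹) * z v /
          (∑ u ∈ U.filter (fun u => E u v ∨ E v u), z u) :=
        div_nonneg (mul_nonneg hw.le (hzpos v).le) hNb.le
      simp only [hfdef, hgdef]
      rw [← Real.sqrt_mul hwn]
      have heq : ((minIn v)⁻¹ + (minOut v)⁻¹) * z v /
          (∑ u ∈ U.filter (fun u => E u v ∨ E v u), z u) *
          (z v * (∑ u ∈ U.filter (fun u => E u v ∨ E v u), z u) /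
          ((minIn v)⁻¹ + (minOut v)⁻¹)) = z v ^ 2 := by
        rw [div_mul_div_comm, div_eq_iff (mul_ne_zero (ne_of_gt hNb) (ne_of_gt hw))]
        ring
      rw [heq, Real.sqrt_sq (hzpos v).le]
    have h1 : Z = ∑ v ∈ U, f v * g v := by
      rw [hZdef]
      exact (Finset.sum_congr rfl hfg).symm
    have h2 := Finset.sum_mul_sq_le_sq_mul_sq U f g
    have h3 : ∑ v ∈ U, f v ^ 2 = ∑ v ∈ U, ((minIn v)⁻¹ + (minOut v)⁻¹) * z v /
        (∑ u ∈ U.filter (fun u => E u v ∨ E v u), z u) := by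
      refine Finset.sum_congr rfl (fun v hv => ?_)
      simp only [hfdef]
      refine Real.sq_sqrt ?_
      refine div_nonneg (mul_nonneg ?_ (hzpos v).le) (hNbpos v hv).le
      exact add_nonneg (le_of_lt (inv_pos.mpr (hIn v))) (le_of_lt (inv_pos.mpr (hOut v)))
    have h4 : ∑ v ∈ U, g v ^ 2 = ∑ v ∈ U, z v *
        (∑ u ∈ U.filter (fun u => E u v ∨ E v u), z u) / ((minIn v)⁻¹ + (minOut v)⁻¹) := by
      refine Finset.sum_congr rfl (fun v hv => ?_)
      simp only [hgdef]
      refine Real.sq_sqrt ?_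
      refine div_nonneg (mul_nonneg (hzpos v).le (hNbpos v hv).le) ?_
      exact add_nonneg (le_of_lt (inv_pos.mpr (hIn v))) (le_of_lt (inv_pos.mpr (hOut v)))
    have hg2nonneg : 0 ≤ ∑ v ∈ U, z v *
        (∑ u ∈ U.filter (fun u => E u v ∨ E v u), z u) / ((minIn v)⁻¹ + (minOut v)⁻¹) := by
      rw [← h4]
      exact Finset.sum_nonneg (fun v _ => sq_nonneg _)
    calc Z ^ 2 = (∑ v ∈ U, f v * g v) ^ 2 := by rw [← h1]
      _ ≤ (∑ v ∈ U, f v ^ 2) * (∑ v ∈ U, g v ^ 2) := h2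
      _ = (∑ v ∈ U, ((minIn v)⁻¹ + (minOut v)⁻¹) * z v /
            (∑ u ∈ U.filter (fun u => E u v ∨ E v u), z u)) *
          (∑ v ∈ U, z v * (∑ u ∈ U.filter (fun u => E u v ∨ E v u), z u) /
            ((minIn v)⁻¹ + (minOut v)⁻¹)) := by rw [h3, h4]
      _ ≤ A * ∑ v ∈ U, z v * (∑ u ∈ U.filter (fun u => E u v ∨ E v u), z u) /
            ((minIn v)⁻¹ + (minOut v)⁻¹) := mul_le_mul_of_nonneg_right hCW hg2nonneg
  -- combine everything
  have hmid : ∑ v ∈ U, z v * (∑ u ∈ U.filter (fun u => E u v ∨ E v u), z u) /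
      ((minIn v)⁻¹ + (minOut v)⁻¹)
      ≤ (∑ v ∈ U, minIn v * z v * (∑ u ∈ U.filter (fun u => E u v), z u))
        + (∑ v ∈ U, minOut v * z v * ∑ u ∈ U.filter (fun u => E v u), z u) := by
    rw [← Finset.sum_add_distrib]
    exact Finset.sum_le_sum hper
  have hfinal : Z ^ 2 < Z ^ 2 := by
    have c1 : Z ^ 2 ≤ A * ((∑ v ∈ U, minIn v * z v * (∑ u ∈ U.filter (fun u => E u v), z u))
        + (∑ v ∈ U, minOut v * z v * ∑ u ∈ U.filter (fun u => E v u), z u)) :=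
      le_trans hCS (mul_le_mul_of_nonneg_left hmid hApos.le)
    rw [← hswap] at c1
    have c2 : (∑ v ∈ U, minIn v * z v * (∑ u ∈ U.filter (fun u => E u v), z u))
        + (∑ v ∈ U, z v * ∑ u ∈ U.filter (fun u => E u v), z u * minOut u)
        ≤ 2 * ∑ v ∈ U, z v * (∑ u ∈ U.filter (fun u => E u v), z u * p u v) := by
      nlinarith [hS1]
    have c3 : Z ^ 2 ≤ A * (2 * ∑ v ∈ U, z v * (∑ u ∈ U.filter (fun u => E u v), z u * p u v)) :=
      le_trans c1 (mul_le_mul_of_nonneg_left c2 hApos.le)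
    have c4 : A * (2 * ∑ v ∈ U, z v * (∑ u ∈ U.filter (fun u => E u v), z u * p u v))
        < A * (2 * (Z * (Z / (2 * A)))) := by
      have := mul_lt_mul_of_pos_left hup (show (0:ℝ) < 2 by norm_num)
      exact mul_lt_mul_of_pos_left this hApos
    have c5 : A * (2 * (Z * (Z / (2 * A)))) = Z ^ 2 := by
      have hAne : A ≠ 0 := ne_of_gt hApos
      field_simp
    calc Z ^ 2 ≤ _ := c3
      _ < _ := c4
      _ = Z ^ 2 := c5
  exact absurd hfinal (lt_irrefl _)

lemma peel {V : Type*} [Fintype V] [DecidableEq V]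
    (E : V → V → Prop) [DecidableRel E] (hloop : ∀ i, E i i)
    (p : V → V → ℝ) (z minIn minOut : V → ℝ) (β A : ℝ) (hβ0 : 0 < β)
    (hzβ : ∀ i, β ≤ z i)
    (hp0 : ∀ i j, 0 ≤ p i j)
    (hIn : ∀ i, 0 < minIn i) (hOut : ∀ i, 0 < minOut i)
    (hInle : ∀ i j, E j i → minIn i ≤ p j i)
    (hOutle : ∀ i j, E i j → minOut i ≤ p i j)
    (hA : ∀ S : Finset V, IsIndepSet E S → ∑ i ∈ S, ((minIn i)⁻¹ + (minOut i)⁻¹) ≤ A) :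
    ∀ U : Finset V, U.Nonempty →
      ∑ v ∈ U, z v / (∑ u ∈ U.filter (fun u => E u v), z u * p u v)
        ≤ 2 * A * (1 + 2 * Real.log ((∑ v ∈ U, z v) / β)) := by
  have hzpos : ∀ i, 0 < z i := fun i => lt_of_lt_of_le hβ0 (hzβ i)
  have hsing : ∀ v : V, IsIndepSet E {v} := by
    intro v i hi j hj hij
    rw [Finset.mem_singleton] at hi hj
    subst hi; subst hj; exact absurd rfl hij
  intro U
  induction U using Finset.strongInduction with
  | _ U ih =>
    intro hU
    have hApos : 0 < A := by
      obtain ⟨v₁, _⟩ := hU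
      have h := hA {v₁} (hsing v₁)
      rw [Finset.sum_singleton] at h
      have h1 := hIn v₁
      have h2 := hOut v₁
      have : 0 < (minIn v₁)⁻¹ + (minOut v₁)⁻¹ := by positivity
      linarith
    set Z := ∑ v ∈ U, z v with hZdef
    have hZpos : 0 < Z := Finset.sum_pos (fun i _ => hzpos i) hU
    obtain ⟨v₀, hv₀U, hv₀⟩ := exists_good_vertex E hloop p z minIn minOut β A hβ0 hzβ hp0
      hIn hOut hInle hOutle hA U hU
    have hDpos : 0 < ∑ u ∈ U.filter (fun u => E u v₀), z u * p u v₀ :=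
      lt_of_lt_of_le (by positivity) hv₀
    have hzZ : z v₀ ≤ Z := by
      rw [hZdef]
      exact Finset.single_le_sum (fun i _ => (hzpos i).le) hv₀U
    have hlogZ : 0 ≤ Real.log (Z / β) := by
      refine Real.log_nonneg ?_
      rw [le_div_iff₀ hβ0]
      have := hzβ v₀
      linarith
    have hterm : z v₀ / (∑ u ∈ U.filter (fun u => E u v₀), z u * p u v₀)
        ≤ 2 * A * (z v₀ / Z) := by
      have h1 : z v₀ / (∑ u ∈ U.filter (fun u => E u v₀), z u * p u v₀)
          ≤ z v₀ / (Z / (2 * A)) :=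
        div_le_div_of_nonneg_left (hzpos v₀).le (by positivity) hv₀
      have h2 : z v₀ / (Z / (2 * A)) = 2 * A * (z v₀ / Z) := by
        field_simp
      linarith
    have hsplit : ∑ v ∈ U, z v / (∑ u ∈ U.filter (fun u => E u v), z u * p u v)
        = z v₀ / (∑ u ∈ U.filter (fun u => E u v₀), z u * p u v₀)
          + ∑ v ∈ U.erase v₀, z v / (∑ u ∈ U.filter (fun u => E u v), z u * p u v) :=
      (Finset.add_sum_erase U _ hv₀U).symm
    have htail : ∀ v ∈ U.erase v₀,
        z v / (∑ u ∈ U.filter (fun u => E u v), z u * p u v)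
        ≤ z v / (∑ u ∈ (U.erase v₀).filter (fun u => E u v), z u * p u v) := by
      intro v hv
      have hvU : v ∈ U := Finset.mem_of_mem_erase hv
      have hpos' : 0 < ∑ u ∈ (U.erase v₀).filter (fun u => E u v), z u * p u v := by
        refine Finset.sum_pos' (fun u hu => mul_nonneg (hzpos u).le (hp0 u v)) ⟨v, ?_, ?_⟩
        · simp only [Finset.mem_filter]
          exact ⟨hv, hloop v⟩
        · exact mul_pos (hzpos v) (lt_of_lt_of_le (hIn v) (hInle v v (hloop v)))
      have hle : ∑ u ∈ (U.erase v₀).filter (fun u => E u v), z u * p u v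
          ≤ ∑ u ∈ U.filter (fun u => E u v), z u * p u v :=
        Finset.sum_le_sum_of_subset_of_nonneg
          (Finset.filter_subset_filter _ (Finset.erase_subset _ _))
          (fun u _ _ => mul_nonneg (hzpos u).le (hp0 u v))
      exact div_le_div_of_nonneg_left (hzpos v).le hpos' hle
    rcases (U.erase v₀).eq_empty_or_nonempty with hem | hne
    · -- single vertex left
      rw [hsplit, hem, Finset.sum_empty, add_zero]
      have h1 : 2 * A * (z v₀ / Z) ≤ 2 * A * 1 := by
        refine mul_le_mul_of_nonneg_left ?_ (by positivity)
        rw [div_le_one hZpos]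
        exact hzZ
      have h2 : 2 * A * 1 ≤ 2 * A * (1 + 2 * Real.log (Z / β)) := by
        refine mul_le_mul_of_nonneg_left ?_ (by positivity)
        linarith
      linarith
    · have hss : U.erase v₀ ⊂ U := Finset.erase_ssubset hv₀U
      have hIH := ih (U.erase v₀) hss hne
      have htail2 : ∑ v ∈ U.erase v₀, z v / (∑ u ∈ U.filter (fun u => E u v), z u * p u v)
          ≤ 2 * A * (1 + 2 * Real.log ((∑ v ∈ U.erase v₀, z v) / β)) :=
        le_trans (Finset.sum_le_sum htail) hIH
      set Z' := ∑ v ∈ U.erase v₀, z v with hZ'def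
      have hZ'eq : Z' = Z - z v₀ := by
        rw [hZ'def, hZdef]
        exact Finset.sum_erase_eq_sub hv₀U
      have hZ'pos : 0 < Z' := Finset.sum_pos (fun i _ => hzpos i) hne
      -- key log inequality
      have hkey : z v₀ / Z + 2 * Real.log (Z' / β) ≤ 2 * Real.log (Z / β) := by
        have hu1 : 0 < z v₀ / Z := div_pos (hzpos v₀) hZpos
        have hu2 : z v₀ / Z < 1 := by
          rw [div_lt_one hZpos]
          linarith
        have hZ'Z : Z' = Z * (1 - z v₀ / Z) := by
          field_simp
          linarith [hZ'eq]
        have hlog1 : Real.log (1 - z v₀ / Z) ≤ -(z v₀ / Z) := by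
          have h1 : 1 - z v₀ / Z ≤ Real.exp (-(z v₀ / Z)) := by
            have := Real.add_one_le_exp (-(z v₀ / Z))
            linarith
          have h2 := Real.log_le_log (by linarith) h1
          rwa [Real.log_exp] at h2
        have hlogZ' : Real.log Z' = Real.log Z + Real.log (1 - z v₀ / Z) := by
          rw [hZ'Z]
          exact Real.log_mul (ne_of_gt hZpos) (by linarith)
        have e1 : Real.log (Z' / β) = Real.log Z' - Real.log β :=
          Real.log_div (ne_of_gt hZ'pos) (ne_of_gt hβ0)
        have e2 : Real.log (Z / β) = Real.log Z - Real.log β :=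
          Real.log_div (ne_of_gt hZpos) (ne_of_gt hβ0)
        rw [e1, e2, hlogZ']
        linarith
      have hmul := mul_le_mul_of_nonneg_left hkey (show (0:ℝ) ≤ 2 * A by positivity)
      rw [hsplit]
      calc z v₀ / (∑ u ∈ U.filter (fun u => E u v₀), z u * p u v₀)
            + ∑ v ∈ U.erase v₀, z v / (∑ u ∈ U.filter (fun u => E u v), z u * p u v)
          ≤ 2 * A * (z v₀ / Z) + 2 * A * (1 + 2 * Real.log (Z' / β)) := by
            exact add_le_add hterm htail2
        _ ≤ 2 * A * (1 + 2 * Real.log (Z / β)) := by nlinarith [hmul]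

theorem stmt_14 {V : Type*} [Fintype V] [DecidableEq V] (K : ℕ)
    (hK : Fintype.card V = K) (hK2 : 2 ≤ K)
    (E : V → V → Prop) [DecidableRel E] (hloop : ∀ i, E i i)
    (p : V → V → ℝ) (hp : ∀ i j, 0 ≤ p i j ∧ p i j ≤ 1)
    (z : V → ℝ) (β : ℝ) (hβ0 : 0 < β) (hβ : β ≤ 1 / 2)
    (hz1 : ∑ i, z i ≤ 1) (hzβ : ∀ i, β ≤ z i)
    (ρ : ℝ) (hρpos : 0 < ρ)
    (hρ : IsLeast {x | ∃ i, x = ∑ j ∈ Finset.univ.filter (fun j => E j i), p j i} ρ)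
    (minIn minOut : V → ℝ)
    (hmin : ∀ i, IsLeast {x | ∃ j, E j i ∧ x = p j i} (minIn i))
    (hmout : ∀ i, IsLeast {x | ∃ j, E i j ∧ x = p i j} (minOut i))
    (hminpos : ∀ i, 0 < minIn i) (hmoutpos : ∀ i, 0 < minOut i) :
    ∑ i, z i / (∑ j ∈ Finset.univ.filter (fun j => E j i), z j * p j i) ≤
      6 * (weightedIndepNum E (fun i => (minIn i)⁻¹) +
            weightedIndepNum E (fun i => (minOut i)⁻¹)) *
        Real.log (2 * (K : ℝ) ^ 2 / (β * ρ)) := by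
  classical
  have hVne : Nonempty V := by
    rw [← Fintype.card_pos_iff, hK]
    omega
  have hzpos : ∀ i, 0 < z i := fun i => lt_of_lt_of_le hβ0 (hzβ i)
  have hInle : ∀ i j, E j i → minIn i ≤ p j i := fun i j h => (hmin i).2 ⟨j, h, rfl⟩
  have hOutle : ∀ i j, E i j → minOut i ≤ p i j := fun i j h => (hmout i).2 ⟨j, h, rfl⟩
  -- the weighted independence numbers
  set αm := weightedIndepNum E (fun i => (minIn i)⁻¹) with hαm
  set αp := weightedIndepNum E (fun i => (minOut i)⁻¹) with hαp
  have hbddm : BddAbove {x | ∃ S : Finset V, IsIndepSet E S ∧ x = ∑ i ∈ S, (minIn i)⁻¹} := by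
    refine ⟨∑ i, (minIn i)⁻¹, ?_⟩
    rintro x ⟨S, hS, rfl⟩
    exact Finset.sum_le_sum_of_subset_of_nonneg (Finset.subset_univ S)
      (fun i _ _ => le_of_lt (inv_pos.mpr (hminpos i)))
  have hbddp : BddAbove {x | ∃ S : Finset V, IsIndepSet E S ∧ x = ∑ i ∈ S, (minOut i)⁻¹} := by
    refine ⟨∑ i, (minOut i)⁻¹, ?_⟩
    rintro x ⟨S, hS, rfl⟩
    exact Finset.sum_le_sum_of_subset_of_nonneg (Finset.subset_univ S)
      (fun i _ _ => le_of_lt (inv_pos.mpr (hmoutpos i)))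
  have hαmge : ∀ S : Finset V, IsIndepSet E S → ∑ i ∈ S, (minIn i)⁻¹ ≤ αm := by
    intro S hS
    exact le_csSup hbddm ⟨S, hS, rfl⟩
  have hαpge : ∀ S : Finset V, IsIndepSet E S → ∑ i ∈ S, (minOut i)⁻¹ ≤ αp := by
    intro S hS
    exact le_csSup hbddp ⟨S, hS, rfl⟩
  have hA : ∀ S : Finset V, IsIndepSet E S →
      ∑ i ∈ S, ((minIn i)⁻¹ + (minOut i)⁻¹) ≤ αm + αp := by
    intro S hS
    rw [Finset.sum_add_distrib]
    exact add_le_add (hαmge S hS) (hαpge S hS)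
  have hApos : 0 < αm + αp := by
    obtain ⟨v⟩ := hVne
    have hsing : IsIndepSet E {v} := by
      intro i hi j hj hij
      rw [Finset.mem_singleton] at hi hj
      subst hi; subst hj; exact absurd rfl hij
    have h1 : (minIn v)⁻¹ ≤ αm := by
      have := hαmge {v} hsing
      rwa [Finset.sum_singleton] at this
    have h2 : (minOut v)⁻¹ ≤ αp := by
      have := hαpge {v} hsing
      rwa [Finset.sum_singleton] at this
    have := inv_pos.mpr (hminpos v)
    have := inv_pos.mpr (hmoutpos v)
    linarith
  -- apply the peeling bound
  have huniv : (Finset.univ : Finset V).Nonempty := Finset.univ_nonempty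
  have hmain := peel E hloop p z minIn minOut β (αm + αp) hβ0 hzβ (fun i j => (hp i j).1)
    hminpos hmoutpos hInle hOutle hA Finset.univ huniv
  -- numeric facts
  have hKR : (2:ℝ) ≤ (K:ℝ) := by exact_mod_cast hK2
  have hK0 : (0:ℝ) < (K:ℝ) := by linarith
  have hρK : ρ ≤ (K:ℝ) := by
    obtain ⟨i₀, hi₀⟩ := hρ.1
    have h1 : ∑ j ∈ Finset.univ.filter (fun j => E j i₀), p j i₀
        ≤ (Finset.univ.filter (fun j => E j i₀)).card • (1:ℝ) :=
      Finset.sum_le_card_nsmul _ _ 1 (fun j _ => (hp j i₀).2)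
    have h2 : ((Finset.univ.filter (fun j => E j i₀)).card : ℝ) ≤ (K:ℝ) := by
      have := Finset.card_filter_le Finset.univ (fun j => E j i₀)
      have h3 : (Finset.univ : Finset V).card = K := by rw [Finset.card_univ, hK]
      exact_mod_cast le_trans this (le_of_eq h3)
    rw [nsmul_eq_mul, mul_one] at h1
    rw [hi₀]
    linarith
  have hZ1 : ∑ v ∈ Finset.univ, z v ≤ 1 := hz1
  have hZpos : 0 < ∑ v ∈ Finset.univ, z v := Finset.sum_pos (fun i _ => hzpos i) huniv
  -- log comparisons
  have hlog1 : Real.log ((∑ v ∈ Finset.univ, z v) / β) ≤ Real.log (1 / β) := by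
    refine Real.log_le_log (by positivity) ?_
    gcongr
  -- scalar inequality : 1 + 2 log(1/β) ≤ 3 log(2K²/(βρ))
  have hlogβ : Real.log β ≤ -Real.log 2 := by
    have h1 : Real.log β ≤ Real.log (1/2) := Real.log_le_log hβ0 hβ
    have h2 : Real.log ((1:ℝ)/2) = -Real.log 2 := by
      rw [one_div, Real.log_inv]
    linarith
  have hlogρ : Real.log ρ ≤ Real.log (K:ℝ) := Real.log_le_log hρpos hρK
  have hlogK : Real.log 2 ≤ Real.log (K:ℝ) := Real.log_le_log (by norm_num) hKR
  have hlog2 : (0.6931471803 : ℝ) < Real.log 2 := Real.log_two_gt_d9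
  have hLexp : Real.log (2 * (K:ℝ) ^ 2 / (β * ρ))
      = Real.log 2 + 2 * Real.log (K:ℝ) - Real.log β - Real.log ρ := by
    rw [Real.log_div (by positivity) (by positivity)]
    rw [Real.log_mul (by norm_num) (by positivity)]
    rw [Real.log_mul (ne_of_gt hβ0) (ne_of_gt hρpos)]
    rw [Real.log_pow]
    push_cast
    ring
  have hscalar : 1 + 2 * Real.log (1 / β) ≤ 3 * Real.log (2 * (K:ℝ) ^ 2 / (β * ρ)) := by
    rw [hLexp, one_div, Real.log_inv]
    linarith
  -- put everything together
  have hchain : ∑ i, z i / (∑ j ∈ Finset.univ.filter (fun j => E j i), z j * p j i)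
      ≤ 2 * (αm + αp) * (1 + 2 * Real.log (1 / β)) := by
    refine le_trans hmain ?_
    refine mul_le_mul_of_nonneg_left ?_ (by positivity)
    linarith
  have hfin : 2 * (αm + αp) * (1 + 2 * Real.log (1 / β))
      ≤ 6 * (αm + αp) * Real.log (2 * (K:ℝ) ^ 2 / (β * ρ)) := by
    have h1 : 0 ≤ 1 + 2 * Real.log (1 / β) := by
      have : 0 ≤ Real.log (1 / β) := by
        refine Real.log_nonneg ?_
        rw [le_div_iff₀ hβ0]
        linarith
      linarith
    nlinarith [mul_le_mul_of_nonneg_left hscalar (le_of_lt hApos)]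
  linarith
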